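/- Let n ≥ 2 and a ∈ ℝ. The function Γ_d(x) = xₙ^{1−a}/|x|^{n−a} satisfies div(xₙ^a ∇Γ_d) = 0 at every point of ℝⁿ₊ \ {0}, i.e., xₙ^a ΔΓ_d + a xₙ^{a−1} ∂Γ_d/∂xₙ = 0 there. -/

import Mathlib

open Real Filter
open Topology

/-- Partial derivative of `u` in the `i`-th coordinate direction. -/
noncomputable def partialD {n : ℕ} (i : Fin n) (u : EuclideanSpace ℝ (Fin n) → ℝ)
    (y : EuclideanSpace ℝ (Fin n)) : ℝ :=
  fderiv ℝ u y (EuclideanSpace.single i 1)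

/-- The Laplacian of `u`, as a sum of repeated partial derivatives. -/
noncomputable def lapl {n : ℕ} (u : EuclideanSpace ℝ (Fin n) → ℝ)
    (y : EuclideanSpace ℝ (Fin n)) : ℝ :=
  ∑ j, partialD j (fun z => partialD j u z) y

/-- The weighted operator `div(yᵢ^a ∇u) = yᵢ^a Δu + a yᵢ^(a-1) ∂u/∂yᵢ`,
where `i` plays the role of the last coordinate. -/
noncomputable def divA {n : ℕ} (i : Fin n) (a : ℝ) (u : EuclideanSpace ℝ (Fin n) → ℝ)
    (y : EuclideanSpace ℝ (Fin n)) : ℝ :=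
  (y i) ^ a * lapl u y + a * (y i) ^ (a - 1) * partialD i u y

/-- The inversion `y ↦ x + λ²(y-x)/|y-x|²` centered at `x` with radius `λ`. -/
noncomputable def inversion {n : ℕ} (x : EuclideanSpace ℝ (Fin n)) (lam : ℝ)
    (y : EuclideanSpace ℝ (Fin n)) : EuclideanSpace ℝ (Fin n) :=
  x + (lam ^ 2 / ‖y - x‖ ^ 2) • (y - x)

/-- The Kelvin-type transform `u_{x,λ}(y) = (λ/|y-x|)^(n-2+a) u(x + λ²(y-x)/|y-x|²)`. -/
noncomputable def kelvin {n : ℕ} (a : ℝ) (x : EuclideanSpace ℝ (Fin n)) (lam : ℝ)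
    (u : EuclideanSpace ℝ (Fin n) → ℝ) (y : EuclideanSpace ℝ (Fin n)) : ℝ :=
  (lam / ‖y - x‖) ^ ((n : ℝ) - 2 + a) * u (inversion x lam y)

/-! ### Auxiliary machinery -/

/-- The monomial `z ↦ b * (z i)^p * (‖z‖²)^q`. -/
noncomputable def Pw {n : ℕ} (i : Fin n) (b p q : ℝ) (z : EuclideanSpace ℝ (Fin n)) : ℝ :=
  b * (z i) ^ p * (‖z‖ ^ 2) ^ q

lemma hasFDerivAt_Pw {n : ℕ} (i : Fin n) (b p q : ℝ) {y : EuclideanSpace ℝ (Fin n)}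
    (hyi : y i ≠ 0) (hy : y ≠ 0) :
    HasFDerivAt (Pw i b p q)
      ((b * (p * (y i) ^ (p - 1)) * (‖y‖ ^ 2) ^ q) •
          (EuclideanSpace.proj i : EuclideanSpace ℝ (Fin n) →L[ℝ] ℝ)
        + (b * (y i) ^ p * (2 * (q * (‖y‖ ^ 2) ^ (q - 1)))) • (innerSL ℝ y)) y := by
  have hnorm : (‖y‖ ^ 2 : ℝ) ≠ 0 := by
    have : ‖y‖ ≠ 0 := norm_ne_zero_iff.2 hy
    positivity
  have hproj : HasFDerivAt (fun z : EuclideanSpace ℝ (Fin n) => z i)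
      (EuclideanSpace.proj i : EuclideanSpace ℝ (Fin n) →L[ℝ] ℝ) y :=
    (EuclideanSpace.proj i : EuclideanSpace ℝ (Fin n) →L[ℝ] ℝ).hasFDerivAt
  have h1 : HasFDerivAt (fun z : EuclideanSpace ℝ (Fin n) => (z i) ^ p)
      ((p * (y i) ^ (p - 1)) • (EuclideanSpace.proj i : EuclideanSpace ℝ (Fin n) →L[ℝ] ℝ)) y :=
    by have := (Real.hasDerivAt_rpow_const (p := p) (Or.inl hyi)).comp_hasFDerivAt y hproj; exact this
  have h2 : HasFDerivAt (fun z : EuclideanSpace ℝ (Fin n) => (‖z‖ ^ 2) ^ q)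
      ((q * (‖y‖ ^ 2) ^ (q - 1)) • (2 • (innerSL ℝ y))) y :=
    by have := (Real.hasDerivAt_rpow_const (p := q) (Or.inl hnorm)).comp_hasFDerivAt (f := fun z : EuclideanSpace ℝ (Fin n) => ‖z‖ ^ 2) y (hasStrictFDerivAt_norm_sq y).hasFDerivAt; exact this
  have h := (h1.mul h2).const_mul b
  have heq : Pw i b p q = fun z : EuclideanSpace ℝ (Fin n) =>
      b * ((z i) ^ p * (‖z‖ ^ 2) ^ q) := by
    funext z; simp [Pw, mul_assoc]
  rw [heq]
  refine h.congr_fderiv ?_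
  ext z
  simp only [ContinuousLinearMap.add_apply, ContinuousLinearMap.coe_smul',
    Pi.smul_apply, smul_eq_mul, ContinuousLinearMap.smul_apply]
  ring

lemma fderiv_Pw_single {n : ℕ} (i : Fin n) (b p q : ℝ) {y : EuclideanSpace ℝ (Fin n)}
    (hyi : y i ≠ 0) (hy : y ≠ 0) (j : Fin n) :
    fderiv ℝ (Pw i b p q) y (EuclideanSpace.single j 1)
      = b * (p * (y i) ^ (p - 1)) * (‖y‖ ^ 2) ^ q * (if j = i then 1 else 0)
        + b * (y i) ^ p * (2 * (q * (‖y‖ ^ 2) ^ (q - 1))) * y j := by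
  rw [(hasFDerivAt_Pw i b p q hyi hy).fderiv]
  simp only [ContinuousLinearMap.add_apply, ContinuousLinearMap.coe_smul', Pi.smul_apply,
    smul_eq_mul, innerSL_apply_apply]
  have h1 : (EuclideanSpace.proj i : EuclideanSpace ℝ (Fin n) →L[ℝ] ℝ)
      (EuclideanSpace.single j 1) = (if j = i then 1 else 0) := by
    simp [EuclideanSpace.single_apply, eq_comm]
  have h2 : (inner ℝ y (EuclideanSpace.single j (1 : ℝ)) : ℝ) = y j := by
    rw [EuclideanSpace.inner_single_right]
    simp
  rw [h1, h2]

/-- **Dirichlet kernel.** For `n ≥ 2` and `a ∈ ℝ`, the function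
`Γ_d(x) = xₙ^(1-a) / |x|^(n-a)` satisfies `div(xₙ^a ∇Γ_d) = 0` at every point of
`ℝⁿ₊ \ {0}`. -/
theorem dirichlet_kernel (n : ℕ) (hn : 2 ≤ n) (a : ℝ)
    (i : Fin n) (hi : (i : ℕ) = n - 1) :
    ∀ x : EuclideanSpace ℝ (Fin n), 0 < x i → x ≠ 0 →
      divA i a (fun z => (z i) ^ (1 - a) / ‖z‖ ^ ((n : ℝ) - a)) x = 0 := by
  intro x hxi hx0
  set u : EuclideanSpace ℝ (Fin n) → ℝ :=
    fun z => (z i) ^ (1 - a) / ‖z‖ ^ ((n : ℝ) - a) with hu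
  set q : ℝ := (a - n) / 2 with hq
  have hti : x i ≠ 0 := ne_of_gt hxi
  have hS : (0 : ℝ) < ‖x‖ ^ 2 := by
    have : ‖x‖ ≠ 0 := norm_ne_zero_iff.2 hx0
    positivity
  -- `u` agrees with a `Pw` monomial away from the origin
  have hueq : ∀ z : EuclideanSpace ℝ (Fin n), z ≠ 0 → u z = Pw i 1 (1 - a) q z := by
    intro z hz
    have h0 : (0 : ℝ) < ‖z‖ := norm_pos_iff.2 hz
    have h2 : ((‖z‖ : ℝ) ^ 2) ^ q = ‖z‖ ^ (a - (n : ℝ)) := by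
      rw [← Real.rpow_natCast ‖z‖ 2, ← Real.rpow_mul h0.le]
      congr 1
      rw [hq]; push_cast; ring
    simp only [hu, Pw, one_mul, h2]
    rw [div_eq_mul_inv, ← Real.rpow_neg h0.le, show -((n : ℝ) - a) = a - (n : ℝ) by ring]
  -- the open neighbourhood on which everything is smooth
  have hU : {z : EuclideanSpace ℝ (Fin n) | z i ≠ 0 ∧ z ≠ 0} ∈ 𝓝 x := by
    have h1 : IsOpen {z : EuclideanSpace ℝ (Fin n) | z i ≠ 0} :=
      isOpen_ne.preimage (EuclideanSpace.proj i).continuous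
    have h2 : IsOpen {z : EuclideanSpace ℝ (Fin n) | z ≠ 0} := isOpen_ne
    exact (h1.inter h2).mem_nhds ⟨hti, hx0⟩
  -- first order partial derivatives
  have hpart : ∀ z : EuclideanSpace ℝ (Fin n), z i ≠ 0 → z ≠ 0 → ∀ j : Fin n,
      partialD j u z = (1 - a) * (z i) ^ (-a) * (‖z‖ ^ 2) ^ q * (if j = i then 1 else 0)
        + 2 * q * ((z i) ^ (1 - a) * (‖z‖ ^ 2) ^ (q - 1)) * z j := by
    intro z hzi hz0 j
    have hzev : u =ᶠ[𝓝 z] Pw i 1 (1 - a) q := by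
      filter_upwards [isOpen_ne.mem_nhds hz0] with w hw using hueq w hw
    rw [partialD, hzev.fderiv_eq, fderiv_Pw_single i 1 (1 - a) q hzi hz0 j,
      show (1 - a - 1 : ℝ) = -a by ring]
    ring
  -- second order partial derivatives
  have hsecond : ∀ j : Fin n, partialD j (fun z => partialD j u z) x =
      (if j = i then
          (1 - a) * (-a) * (x i) ^ (-a - 1) * (‖x‖ ^ 2) ^ q
            + (1 - a) * (2 * q) * (x i) ^ (-a) * (‖x‖ ^ 2) ^ (q - 1) * x i
            + (2 * q) * (1 - a) * (x i) ^ (-a) * (‖x‖ ^ 2) ^ (q - 1) * x i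
        else 0)
      + (2 * q) * (2 * (q - 1)) * (x i) ^ (1 - a) * (‖x‖ ^ 2) ^ (q - 1 - 1) * (x j * x j)
      + (2 * q) * (x i) ^ (1 - a) * (‖x‖ ^ 2) ^ (q - 1) := by
    intro j
    have hD1 := hasFDerivAt_Pw i ((1 - a) * (if j = i then 1 else 0)) (-a) q hti hx0
    have hD2' := (hasFDerivAt_Pw i (2 * q) (1 - a) (q - 1) hti hx0).mul
      (EuclideanSpace.proj j).hasFDerivAt
    have hD : HasFDerivAt
        (fun z : EuclideanSpace ℝ (Fin n) =>
          Pw i ((1 - a) * (if j = i then 1 else 0)) (-a) q z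
            + Pw i (2 * q) (1 - a) (q - 1) z * z j)
        (((((1 - a) * (if j = i then 1 else 0)) * ((-a) * (x i) ^ (-a - 1)) * (‖x‖ ^ 2) ^ q) •
            (EuclideanSpace.proj i : EuclideanSpace ℝ (Fin n) →L[ℝ] ℝ)
          + (((1 - a) * (if j = i then 1 else 0)) * (x i) ^ (-a) *
              (2 * (q * (‖x‖ ^ 2) ^ (q - 1)))) • (innerSL ℝ x))
        + (Pw i (2 * q) (1 - a) (q - 1) x •
            (EuclideanSpace.proj j : EuclideanSpace ℝ (Fin n) →L[ℝ] ℝ)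
          + x j • (((2 * q) * ((1 - a) * (x i) ^ (1 - a - 1)) * (‖x‖ ^ 2) ^ (q - 1)) •
              (EuclideanSpace.proj i : EuclideanSpace ℝ (Fin n) →L[ℝ] ℝ)
            + ((2 * q) * (x i) ^ (1 - a) * (2 * ((q - 1) * (‖x‖ ^ 2) ^ (q - 1 - 1)))) •
              (innerSL ℝ x)))) x := by
      have heq : (-a : ℝ) - 1 = -a - 1 := rfl
      exact hD1.add hD2'
    have hgj : (fun z => partialD j u z) =ᶠ[𝓝 x]
        (fun z : EuclideanSpace ℝ (Fin n) =>
          Pw i ((1 - a) * (if j = i then 1 else 0)) (-a) q z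
            + Pw i (2 * q) (1 - a) (q - 1) z * z j) := by
      filter_upwards [hU] with z hz
      rw [hpart z hz.1 hz.2 j]
      simp only [Pw]
      ring
    rw [partialD, hgj.fderiv_eq, hD.fderiv]
    simp only [ContinuousLinearMap.add_apply, ContinuousLinearMap.coe_smul', Pi.smul_apply,
      smul_eq_mul, innerSL_apply_apply]
    have h1 : (EuclideanSpace.proj i : EuclideanSpace ℝ (Fin n) →L[ℝ] ℝ)
        (EuclideanSpace.single j 1) = (if j = i then 1 else 0) := by
      simp [EuclideanSpace.single_apply, eq_comm]
    have h1' : (EuclideanSpace.proj j : EuclideanSpace ℝ (Fin n) →L[ℝ] ℝ)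
        (EuclideanSpace.single j 1) = 1 := by
      simp [EuclideanSpace.single_apply, eq_comm]
    have h2 : (inner ℝ x (EuclideanSpace.single j (1 : ℝ)) : ℝ) = x j := by
      rw [EuclideanSpace.inner_single_right]; simp
    rw [h1, h1', h2, Pw, show (1 - a - 1 : ℝ) = -a by ring]
    by_cases h : j = i
    · subst h; simp; ring
    · simp only [if_neg h]; ring
  -- sum of squares of coordinates
  have hsum : ∑ j : Fin n, x j * x j = ‖x‖ ^ 2 := by
    rw [EuclideanSpace.norm_eq, Real.sq_sqrt (by positivity)]
    exact Finset.sum_congr rfl fun j _ => by rw [Real.norm_eq_abs, sq_abs, sq]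
  -- the Laplacian
  have hlapl : lapl u x =
      ((1 - a) * (-a) * (x i) ^ (-a - 1) * (‖x‖ ^ 2) ^ q
        + (1 - a) * (2 * q) * (x i) ^ (-a) * (‖x‖ ^ 2) ^ (q - 1) * x i
        + (2 * q) * (1 - a) * (x i) ^ (-a) * (‖x‖ ^ 2) ^ (q - 1) * x i)
      + (2 * q) * (2 * (q - 1)) * (x i) ^ (1 - a) * (‖x‖ ^ 2) ^ (q - 1 - 1) * (‖x‖ ^ 2)
      + (n : ℝ) * ((2 * q) * (x i) ^ (1 - a) * (‖x‖ ^ 2) ^ (q - 1)) := by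
    rw [lapl, Finset.sum_congr rfl fun j _ => hsecond j]
    rw [Finset.sum_add_distrib, Finset.sum_add_distrib, Finset.sum_ite_eq' Finset.univ i]
    rw [← Finset.mul_sum, hsum, Finset.sum_const, Finset.card_univ, Fintype.card_fin,
      nsmul_eq_mul]
    simp
  have hPi : partialD i u x = (1 - a) * (x i) ^ (-a) * (‖x‖ ^ 2) ^ q
      + 2 * q * ((x i) ^ (1 - a) * (‖x‖ ^ 2) ^ (q - 1)) * x i := by
    rw [hpart x hti hx0 i]; simp
  show (x i) ^ a * lapl u x + a * (x i) ^ (a - 1) * partialD i u x = 0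
  rw [hlapl, hPi]
  have hS0 : (‖x‖ ^ 2 : ℝ) ≠ 0 := ne_of_gt hS
  have e1 : (x i) ^ (-a) = (x i) ^ (-a - 1) * x i := by
    have h := Real.rpow_add_one hti (-a - 1)
    rw [show (-a - 1 + 1 : ℝ) = -a by ring] at h
    exact h
  have e2 : (x i) ^ (1 - a) = (x i) ^ (-a - 1) * x i * x i := by
    have h1 := Real.rpow_add_one hti (-a - 1)
    have h2 := Real.rpow_add_one hti (-a - 1 + 1)
    rw [h1] at h2
    rw [show (-a - 1 + 1 + 1 : ℝ) = 1 - a by ring] at h2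
    exact h2
  have e3 : (x i) ^ a = (x i) ^ (a - 1) * x i := by
    have h := Real.rpow_add_one hti (a - 1)
    rw [show (a - 1 + 1 : ℝ) = a by ring] at h
    exact h
  have s1 : ((‖x‖ : ℝ) ^ 2) ^ q = (‖x‖ ^ 2) ^ (q - 1 - 1) * (‖x‖ ^ 2) * (‖x‖ ^ 2) := by
    have h1 := Real.rpow_add_one hS0 (q - 1 - 1)
    have h2 := Real.rpow_add_one hS0 (q - 1 - 1 + 1)
    rw [h1] at h2
    rw [show (q - 1 - 1 + 1 + 1 : ℝ) = q by ring] at h2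
    exact h2
  have s2 : ((‖x‖ : ℝ) ^ 2) ^ (q - 1) = (‖x‖ ^ 2) ^ (q - 1 - 1) * (‖x‖ ^ 2) := by
    have h := Real.rpow_add_one hS0 (q - 1 - 1)
    rw [show (q - 1 - 1 + 1 : ℝ) = q - 1 by ring] at h
    exact h
  rw [e1, e2, e3, s1, s2, hq]
  push_cast
  ring
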